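/- Let v : [0,1] → ℝ be continuous and assume f : [0,1] × ℝ → ℝ satisfies: C(c): f is continuous on [0,1] × ℝ with continuous partial derivative f_x with respect to the second variable; D(f): there exist positive constants A, B with A < 1 such that |f(t,x)| ≤ A|x| + B for all t ∈ [0,1], x ∈ ℝ; D(f_x): inf over [0,1] × ℝ of f_x is > −1. Let x* ∈ 𝕏 be the unique solution of the continuous Dirichlet problem ẍ(t) = f(t,x(t)) + v(t), x(0) = x(1) = 0, and for each N ≥ 2 let x_N be the unique solution of the discrete problem Δ²x_N(k−1) = (1/N²) f(k/N, x_N(k)) + (1/N²) v(k/N), k = 1,…,N−1, x_N(0) = x_N(N) = 0. Then lim_{N→∞} max_{0 ≤ k ≤ N} |x*(k/N) − x_N(k)| = 0, i.e. the discrete solutions are non-spurious. -/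

import Mathlib

open MeasureTheory Set Filter

/-- The `L²(0,1)` norm of a real function, `‖g‖_{L²} = (∫₀¹ g(t)² dt)^{1/2}`. -/
noncomputable def L2norm01 (g : ℝ → ℝ) : ℝ := Real.sqrt (∫ t in (0:ℝ)..1, (g t)^2)

/-- An element of `H²(0,1)`: an absolutely continuous function `x` on `[0,1]`
(represented as the integral of its weak derivative `dx`), whose derivative `dx` is
itself absolutely continuous with weak derivative `ddx ∈ L²(0,1)`. -/
structure H2fun where
  x : ℝ → ℝ
  dx : ℝ → ℝ
  ddx : ℝ → ℝ
  dx_int : IntervalIntegrable dx MeasureTheory.volume 0 1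
  ddx_memLp : MemLp ddx 2 (MeasureTheory.volume.restrict (Set.Ioc (0:ℝ) 1))
  x_rep : ∀ t ∈ Set.Icc (0:ℝ) 1, x t = x 0 + ∫ s in (0:ℝ)..t, dx s
  dx_rep : ∀ t ∈ Set.Icc (0:ℝ) 1, dx t = dx 0 + ∫ s in (0:ℝ)..t, ddx s

/-- An element of `𝕏 = H²(0,1) ∩ H¹₀(0,1)`: an `H²` function with
Dirichlet boundary conditions `x(0) = x(1) = 0`. -/
structure Xfun extends H2fun where
  bc0 : x 0 = 0
  bc1 : x 1 = 0


section NonspuriousAux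
open Finset MeasureTheory Set

lemma abel_identity (e : ℕ → ℝ) (n : ℕ) :
    ∑ j ∈ Finset.range n, (e (j+2) - 2*e (j+1) + e j) * e (j+1)
      = (e (n+1) - e n) * e n - (e 1 - e 0) * e 0
        - ∑ j ∈ Finset.range n, (e (j+1) - e j)^2 := by
  induction n with
  | zero => simp
  | succ n ih =>
      rw [Finset.sum_range_succ, Finset.sum_range_succ (f := fun j => (e (j+1) - e j)^2), ih]
      ring

lemma discrete_stability (N : ℕ) (hN : 2 ≤ N) (e c τ : ℕ → ℝ) (m T : ℝ)
    (hm0 : -1 < m) (hm1 : m ≤ 0)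
    (he0 : e 0 = 0) (heN : e N = 0)
    (hc : ∀ j, m ≤ c j)
    (heq : ∀ j, j < N - 1 → e (j+2) - 2*e (j+1) + e j = c j / (N:ℝ)^2 * e (j+1) + τ j)
    (hT : ∀ j, j < N - 1 → |τ j| ≤ T) :
    ∀ k ≤ N, |e k| ≤ (N:ℝ)^2 * T / (1+m) := by
  have hm1' : (0:ℝ) < 1 + m := by linarith
  have hNpos : (0:ℝ) < N := by
    have : (0:ℕ) < N := by omega
    exact_mod_cast this
  have hT0 : 0 ≤ T := le_trans (abs_nonneg _) (hT 0 (by omega))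
  have hne : (Finset.range (N+1)).Nonempty := Finset.nonempty_range_add_one
  set M := (Finset.range (N+1)).sup' hne (fun k => |e k|) with hMdef
  have hMk : ∀ k, k ≤ N → |e k| ≤ M := fun k hk =>
    Finset.le_sup' (fun k => |e k|) (Finset.mem_range.mpr (by omega))
  have hM0 : 0 ≤ M := le_trans (abs_nonneg (e 0)) (hMk 0 (by omega))
  set S2 := ∑ j ∈ Finset.range N, (e (j+1) - e j)^2 with hS2def
  have hS2nn : 0 ≤ S2 := Finset.sum_nonneg (fun _ _ => sq_nonneg _)
  -- M² ≤ N * S2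
  obtain ⟨k₀, hk₀mem, hk₀⟩ := Finset.exists_mem_eq_sup' hne (fun k => |e k|)
  have hMeq : M = |e k₀| := hMdef.trans hk₀
  clear_value M
  have hk₀N : k₀ ≤ N := by have := Finset.mem_range.mp hk₀mem; omega
  have htel : e k₀ = ∑ j ∈ Finset.range k₀, (e (j+1) - e j) := by
    rw [Finset.sum_range_sub e k₀, he0, sub_zero]
  have habs : |e k₀| ≤ ∑ j ∈ Finset.range k₀, |e (j+1) - e j| := by
    rw [htel]; exact Finset.abs_sum_le_sum_abs _ _
  have hcs : (∑ j ∈ Finset.range k₀, |e (j+1) - e j|)^2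
      ≤ (k₀:ℝ) * ∑ j ∈ Finset.range k₀, (e (j+1) - e j)^2 := by
    have h := Finset.sum_mul_sq_le_sq_mul_sq (Finset.range k₀)
      (fun _ => (1:ℝ)) (fun j => |e (j+1) - e j|)
    simpa [sq_abs] using h
  have hsub : ∑ j ∈ Finset.range k₀, (e (j+1) - e j)^2 ≤ S2 :=
    Finset.sum_le_sum_of_subset_of_nonneg
      (Finset.range_subset_range.mpr hk₀N) (fun _ _ _ => sq_nonneg _)
  have hk₀r : (k₀:ℝ) ≤ (N:ℝ) := by exact_mod_cast hk₀N
  have hsumnn : 0 ≤ ∑ j ∈ Finset.range k₀, (e (j+1) - e j)^2 :=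
    Finset.sum_nonneg (fun _ _ => sq_nonneg _)
  have hM2 : M^2 ≤ (N:ℝ) * S2 := by
    calc M^2 = |e k₀|^2 := by rw [hMeq]
      _ ≤ (∑ j ∈ Finset.range k₀, |e (j+1) - e j|)^2 := pow_le_pow_left₀ (abs_nonneg _) habs 2
      _ ≤ (k₀:ℝ) * ∑ j ∈ Finset.range k₀, (e (j+1) - e j)^2 := hcs
      _ ≤ (N:ℝ) * S2 := mul_le_mul hk₀r hsub hsumnn (le_of_lt hNpos)
  -- energy identity
  have hN1 : N - 1 + 1 = N := by omega
  have hS1 : ∑ j ∈ Finset.range (N-1), (e (j+2) - 2*e (j+1) + e j) * e (j+1) = - S2 := by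
    have hid := abel_identity e (N-1)
    rw [hN1, he0, heN] at hid
    have hsplit := Finset.sum_range_succ (fun j => (e (j+1) - e j)^2) (N-1)
    rw [hN1] at hsplit
    rw [hid, hS2def, hsplit, heN]; ring
  have hS1' : ∑ j ∈ Finset.range (N-1), (c j / (N:ℝ)^2 * e (j+1) + τ j) * e (j+1) = - S2 := by
    rw [← hS1]
    exact Finset.sum_congr rfl (fun j hj => by rw [← heq j (Finset.mem_range.mp hj)])
  -- bound S2
  have hN2 : (0:ℝ) < (N:ℝ)^2 := by positivity
  have hbound : S2 ≤ (N:ℝ) * ((-m) / (N:ℝ)^2 * M^2 + T * M) := by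
    have h1 : S2 = ∑ j ∈ Finset.range (N-1), (-((c j / (N:ℝ)^2 * e (j+1) + τ j) * e (j+1))) := by
      rw [Finset.sum_neg_distrib, hS1', neg_neg]
    have h2 : ∀ j ∈ Finset.range (N-1),
        -((c j / (N:ℝ)^2 * e (j+1) + τ j) * e (j+1)) ≤ (-m) / (N:ℝ)^2 * M^2 + T * M := by
      intro j hj
      have hjN : j < N - 1 := Finset.mem_range.mp hj
      have hje : |e (j+1)| ≤ M := hMk (j+1) (by omega)
      have he2 : (e (j+1))^2 ≤ M^2 := by
        have := abs_nonneg (e (j+1))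
        nlinarith [neg_abs_le (e (j+1)), le_abs_self (e (j+1))]
      have hcj := hc j
      have hτj := hT j hjN
      have t1 : -(c j / (N:ℝ)^2 * e (j+1) * e (j+1)) ≤ (-m) / (N:ℝ)^2 * M^2 := by
        have step : -(c j) * (e (j+1))^2 ≤ (-m) * M^2 := by
          have p1 : (0:ℝ) ≤ (-m) * (M^2 - (e (j+1))^2) :=
            mul_nonneg (by linarith) (by linarith)
          have p2 : (0:ℝ) ≤ (c j - m) * (e (j+1))^2 :=
            mul_nonneg (by linarith) (sq_nonneg _)
          nlinarith
        have h4 : -(c j / (N:ℝ)^2 * e (j+1) * e (j+1)) = (-(c j) * (e (j+1))^2) / (N:ℝ)^2 := by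
          ring
        have h5 : (-m) / (N:ℝ)^2 * M^2 = ((-m) * M^2) / (N:ℝ)^2 := by ring
        rw [h4, h5]
        exact (div_le_div_iff_of_pos_right hN2).mpr step
      have t2 : -(τ j * e (j+1)) ≤ T * M := by
        have habs2 : |τ j * e (j+1)| ≤ T * M := by
          rw [abs_mul]
          exact mul_le_mul hτj hje (abs_nonneg _) hT0
        linarith [neg_abs_le (τ j * e (j+1)), habs2]
      have expand : -((c j / (N:ℝ)^2 * e (j+1) + τ j) * e (j+1))
          = -(c j / (N:ℝ)^2 * e (j+1) * e (j+1)) + -(τ j * e (j+1)) := by ring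
      rw [expand]
      exact add_le_add t1 t2
    calc S2 = ∑ j ∈ Finset.range (N-1), (-((c j / (N:ℝ)^2 * e (j+1) + τ j) * e (j+1))) := h1
      _ ≤ ∑ _j ∈ Finset.range (N-1), ((-m) / (N:ℝ)^2 * M^2 + T * M) := Finset.sum_le_sum h2
      _ = ((N - 1 : ℕ) : ℝ) * ((-m) / (N:ℝ)^2 * M^2 + T * M) := by
          rw [Finset.sum_const, Finset.card_range, nsmul_eq_mul]
      _ ≤ (N:ℝ) * ((-m) / (N:ℝ)^2 * M^2 + T * M) := by
          have hb : 0 ≤ (-m) / (N:ℝ)^2 * M^2 + T * M := by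
            have : 0 ≤ (-m) / (N:ℝ)^2 * M^2 :=
              mul_nonneg (div_nonneg (by linarith) (le_of_lt hN2)) (sq_nonneg _)
            have : 0 ≤ T * M := mul_nonneg hT0 hM0
            linarith [mul_nonneg (div_nonneg (by linarith : (0:ℝ) ≤ -m) (le_of_lt hN2)) (sq_nonneg M)]
          have hcast : ((N - 1 : ℕ) : ℝ) ≤ (N:ℝ) := by
            have h7 : (N - 1 : ℕ) ≤ N := by omega
            exact_mod_cast h7
          exact mul_le_mul_of_nonneg_right hcast hb
  -- combine
  have hMfinal : M ≤ (N:ℝ)^2 * T / (1+m) := by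
    have h3 : (N:ℝ) * ((N:ℝ) * ((-m) / (N:ℝ)^2 * M^2 + T * M)) = (-m)*M^2 + (N:ℝ)^2*T*M := by
      field_simp
    have h6 : (N:ℝ) * S2 ≤ (N:ℝ) * ((N:ℝ) * ((-m) / (N:ℝ)^2 * M^2 + T * M)) :=
      mul_le_mul_of_nonneg_left hbound (le_of_lt hNpos)
    have key : M^2 ≤ (-m)*M^2 + (N:ℝ)^2*T*M := le_trans hM2 (h3 ▸ h6)
    rcases eq_or_lt_of_le hM0 with h | h
    · rw [← h]
      exact div_nonneg (by positivity) (le_of_lt hm1')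
    · rw [le_div_iff₀ hm1']
      have hmul : (M * (1+m)) * M ≤ ((N:ℝ)^2*T) * M := by
        have hexp : (M * (1+m)) * M = M^2 - (-m*M^2) := by ring
        have hexp2 : ((N:ℝ)^2*T) * M = (N:ℝ)^2*T*M := by ring
        rw [hexp, hexp2]
        linarith [key]
      exact le_of_mul_le_mul_right hmul h
  intro k hk
  exact le_trans (hMk k hk) hMfinal

lemma truncation_estimate (x dx g : ℝ → ℝ) (hg : ContinuousOn g (Set.Icc 0 1))
    (hxrep : ∀ t ∈ Set.Icc (0:ℝ) 1, x t = x 0 + ∫ s in (0:ℝ)..t, dx s)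
    (hdxrep : ∀ t ∈ Set.Icc (0:ℝ) 1, dx t = dx 0 + ∫ s in (0:ℝ)..t, g s)
    (a h ε : ℝ) (hh : 0 < h) (hha : h ≤ a) (hah : a + h ≤ 1) (hε : 0 ≤ ε)
    (hmod : ∀ u ∈ Set.Icc (0:ℝ) 1, |u - a| ≤ 2*h → |g u - g a| ≤ ε) :
    |x (a+h) - 2*x a + x (a-h) - h^2 * g a| ≤ h^2 * ε := by
  have hgint : ∀ p q : ℝ, p ∈ Set.Icc (0:ℝ) 1 → q ∈ Set.Icc (0:ℝ) 1 →
      IntervalIntegrable g volume p q := fun p q hp hq =>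
    (hg.mono (Set.uIcc_subset_Icc hp hq)).intervalIntegrable
  have h01 : (0:ℝ) ∈ Set.Icc (0:ℝ) 1 := by constructor <;> norm_num
  have hmem : ∀ t : ℝ, 0 ≤ t → t ≤ 1 → t ∈ Set.Icc (0:ℝ) 1 := fun t h1 h2 => ⟨h1, h2⟩
  have hamem : a ∈ Set.Icc (0:ℝ) 1 := ⟨by linarith, by linarith⟩
  have hapmem : a + h ∈ Set.Icc (0:ℝ) 1 := ⟨by linarith, by linarith⟩
  have hammem : a - h ∈ Set.Icc (0:ℝ) 1 := ⟨by linarith, by linarith⟩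
  -- dx is continuous on [0,1]
  have hdx_cont : ContinuousOn dx (Set.Icc 0 1) := by
    have hprim : ContinuousOn (fun t => dx 0 + ∫ s in (0:ℝ)..t, g s) (Set.Icc 0 1) := by
      apply continuousOn_const.add
      have h01' : (0:ℝ) ∈ Set.uIcc (0:ℝ) 1 := Set.left_mem_uIcc
      have := intervalIntegral.continuousOn_primitive_interval' (hgint 0 1 h01 (by norm_num)) h01'
      simpa [Set.uIcc_of_le (by norm_num : (0:ℝ) ≤ 1)] using this
    exact hprim.congr hdxrep
  have hdxint : ∀ p q : ℝ, p ∈ Set.Icc (0:ℝ) 1 → q ∈ Set.Icc (0:ℝ) 1 →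
      IntervalIntegrable dx volume p q := fun p q hp hq =>
    (hdx_cont.mono (Set.uIcc_subset_Icc hp hq)).intervalIntegrable
  -- second difference as an integral
  have hx3 : x (a+h) - 2*x a + x (a-h)
      = (∫ s in a..(a+h), dx s) - ∫ s in (a-h)..a, dx s := by
    rw [hxrep (a+h) hapmem, hxrep a hamem, hxrep (a-h) hammem]
    have e1 : (∫ s in (0:ℝ)..(a+h), dx s) - ∫ s in (0:ℝ)..a, dx s = ∫ s in a..(a+h), dx s :=
      intervalIntegral.integral_interval_sub_left (hdxint 0 (a+h) h01 hapmem) (hdxint 0 a h01 hamem)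
    have e2 : (∫ s in (0:ℝ)..a, dx s) - ∫ s in (0:ℝ)..(a-h), dx s = ∫ s in (a-h)..a, dx s :=
      intervalIntegral.integral_interval_sub_left (hdxint 0 a h01 hamem) (hdxint 0 (a-h) h01 hammem)
    linarith [e1, e2]
  have hshift : (∫ s in (a-h)..a, dx s) = ∫ s in a..(a+h), dx (s - h) := by
    have := intervalIntegral.integral_comp_sub_right (a := a) (b := a + h) dx h
    rw [this]
    norm_num
  have hsubIcc : Set.uIcc a (a+h) ⊆ Set.Icc (0:ℝ) 1 := Set.uIcc_subset_Icc hamem hapmem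
  have hint1 : IntervalIntegrable dx volume a (a+h) := hdxint a (a+h) hamem hapmem
  have hint2 : IntervalIntegrable (fun s => dx (s - h)) volume a (a+h) := by
    apply ContinuousOn.intervalIntegrable
    apply hdx_cont.comp ((continuous_sub_right h).continuousOn)
    intro s hs
    have hs' : s ∈ Set.Icc a (a+h) := by
      rwa [Set.uIcc_of_le (by linarith : a ≤ a + h)] at hs
    exact ⟨by simp; linarith [hs'.1], by simp; linarith [hs'.2]⟩
  have hdiff : x (a+h) - 2*x a + x (a-h) = ∫ s in a..(a+h), (dx s - dx (s-h)) := by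
    rw [hx3, hshift, ← intervalIntegral.integral_sub hint1 hint2]
  have hconst : h^2 * g a = ∫ s in a..(a+h), h * g a := by
    rw [intervalIntegral.integral_const, smul_eq_mul]
    ring
  have hkey : x (a+h) - 2*x a + x (a-h) - h^2 * g a
      = ∫ s in a..(a+h), (dx s - dx (s-h) - h * g a) := by
    rw [hdiff, hconst, ← intervalIntegral.integral_sub (hint1.sub hint2) intervalIntegrable_const]
  rw [hkey]
  -- pointwise bound on the integrand
  have hpt : ∀ s ∈ Set.uIoc a (a+h), |dx s - dx (s-h) - h * g a| ≤ h * ε := by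
    intro s hs
    rw [Set.uIoc_of_le (by linarith : a ≤ a + h)] at hs
    have hs1 : a < s := hs.1
    have hs2 : s ≤ a + h := hs.2
    have hsmem : s ∈ Set.Icc (0:ℝ) 1 := ⟨by linarith, by linarith⟩
    have hshmem : s - h ∈ Set.Icc (0:ℝ) 1 := ⟨by linarith, by linarith⟩
    have hdxd : dx s - dx (s-h) = ∫ u in (s-h)..s, g u := by
      rw [hdxrep s hsmem, hdxrep (s-h) hshmem]
      have := intervalIntegral.integral_interval_sub_left (hgint 0 s h01 hsmem)
        (hgint 0 (s-h) h01 hshmem)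
      linarith [this]
    have hconst2 : h * g a = ∫ u in (s-h)..s, g a := by
      rw [intervalIntegral.integral_const, smul_eq_mul]
      ring
    rw [hdxd, hconst2,
      ← intervalIntegral.integral_sub (hgint (s-h) s hshmem hsmem) intervalIntegrable_const]
    have hbnd : ∀ u ∈ Set.uIoc (s-h) s, |g u - g a| ≤ ε := by
      intro u hu
      rw [Set.uIoc_of_le (by linarith : s - h ≤ s)] at hu
      have hu1 : s - h < u := hu.1
      have hu2 : u ≤ s := hu.2
      have humem : u ∈ Set.Icc (0:ℝ) 1 := ⟨by linarith, by linarith⟩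
      apply hmod u humem
      rw [abs_le]
      constructor <;> linarith
    have := intervalIntegral.norm_integral_le_of_norm_le_const (f := fun u => g u - g a)
      (C := ε) (a := s - h) (b := s) hbnd
    calc |∫ u in (s-h)..s, (g u - g a)| ≤ ε * |s - (s - h)| := this
      _ = h * ε := by rw [show s - (s-h) = h by ring, abs_of_pos hh]; ring
  have := intervalIntegral.norm_integral_le_of_norm_le_const
    (f := fun s => dx s - dx (s-h) - h * g a) (C := h * ε) (a := a) (b := a + h) hpt
  calc |∫ s in a..(a+h), (dx s - dx (s-h) - h * g a)| ≤ h * ε * |a + h - a| := this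
    _ = h^2 * ε := by rw [show a + h - a = h by ring, abs_of_pos hh]; ring

lemma mvt_coeff (f fx : ℝ → ℝ → ℝ) (t : ℝ) (ht : t ∈ Set.Icc (0:ℝ) 1)
    (hfx_deriv : ∀ t ∈ Set.Icc (0:ℝ) 1, ∀ z : ℝ, HasDerivAt (fun w => f t w) (fx t z) z)
    (m' : ℝ) (hmle : ∀ z : ℝ, m' ≤ fx t z) (y z : ℝ) :
    ∃ cc : ℝ, m' ≤ cc ∧ f t y - f t z = cc * (y - z) := by
  have hcont : ∀ p q : ℝ, ContinuousOn (fun w => f t w) (Set.Icc p q) :=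
    fun p q w _ => ((hfx_deriv t ht w).continuousAt).continuousWithinAt
  rcases lt_trichotomy z y with hlt | heq | hgt
  · obtain ⟨ξ, hξ, hsl⟩ := exists_hasDerivAt_eq_slope (fun w => f t w) (fx t) hlt (hcont z y)
      (fun w _ => hfx_deriv t ht w)
    refine ⟨fx t ξ, hmle ξ, ?_⟩
    rw [hsl, div_mul_cancel₀]
    exact sub_ne_zero.mpr (ne_of_gt hlt)
  · exact ⟨m', le_refl _, by rw [heq]; ring⟩
  · obtain ⟨ξ, hξ, hsl⟩ := exists_hasDerivAt_eq_slope (fun w => f t w) (fx t) hgt (hcont y z)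
      (fun w _ => hfx_deriv t ht w)
    refine ⟨fx t ξ, hmle ξ, ?_⟩
    have h2 : f t z - f t y = fx t ξ * (z - y) := by
      rw [hsl, div_mul_cancel₀]
      exact sub_ne_zero.mpr (ne_of_gt hgt)
    linear_combination (-1 : ℝ) * h2

end NonspuriousAux

/-- **Non-spurious solutions.**
Let `v : [0,1] → ℝ` be continuous and let `f` satisfy C(c), D(f) (`0 < A < 1`, `0 < B`,
`|f(t,x)| ≤ A|x| + B`) and D(f_x) (`inf f_x > −1`).  Let `x⋆ ∈ 𝕏 = H²(0,1) ∩ H¹₀(0,1)`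
be the solution of the continuous problem `ẍ = f(t,x) + v`, `x(0) = x(1) = 0`, and for
every `N ≥ 2` let `xN N` be the solution of the discrete problem
`Δ²x(k−1) = (1/N²) f(k/N, x(k)) + (1/N²) v(k/N)`, `x(0) = x(N) = 0`.  Then
`max_{0 ≤ k ≤ N} |x⋆(k/N) − x_N(k)| → 0` as `N → ∞`. -/

theorem discrete_solutions_are_nonspurious
    (f fx : ℝ → ℝ → ℝ) (v : ℝ → ℝ)
    (hv : ContinuousOn v (Set.Icc (0:ℝ) 1))
    (hf_cont : ContinuousOn (fun p : ℝ × ℝ => f p.1 p.2) (Set.Icc 0 1 ×ˢ Set.univ))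
    (hfx_deriv : ∀ t ∈ Set.Icc (0:ℝ) 1, ∀ z : ℝ, HasDerivAt (fun w => f t w) (fx t z) z)
    (hfx_cont : ContinuousOn (fun p : ℝ × ℝ => fx p.1 p.2) (Set.Icc 0 1 ×ˢ Set.univ))
    (A B : ℝ) (hA : 0 < A) (hB : 0 < B) (hAlt : A < 1)
    (hgrowth : ∀ t ∈ Set.Icc (0:ℝ) 1, ∀ z : ℝ, |f t z| ≤ A * |z| + B)
    (hfx_lb : ∃ m : ℝ, -1 < m ∧ ∀ t ∈ Set.Icc (0:ℝ) 1, ∀ z : ℝ, m ≤ fx t z)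
    -- x⋆ solves the continuous Dirichlet problem
    (xstar : Xfun)
    (hxstar : ∀ᵐ t ∂(volume.restrict (Set.Ioc (0:ℝ) 1)),
        xstar.ddx t = f t (xstar.x t) + v t)
    -- for each N ≥ 2, xN N ∈ 𝔼_N solves the discrete Dirichlet problem
    (xN : ℕ → ℤ → ℝ)
    (hxN : ∀ N : ℕ, 2 ≤ N →
        xN N 0 = 0 ∧ xN N (N:ℤ) = 0 ∧
        ∀ k : ℤ, 1 ≤ k → k ≤ (N:ℤ) - 1 →
          xN N (k+1) - 2 * xN N k + xN N (k-1)
            = (1/(N:ℝ)^2) * f ((k:ℝ)/(N:ℝ)) (xN N k)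
              + (1/(N:ℝ)^2) * v ((k:ℝ)/(N:ℝ))) :
    -- then max_{0 ≤ k ≤ N} |x⋆(k/N) − x_N(k)| → 0 as N → ∞
    ∀ ε > (0:ℝ), ∃ N₀ : ℕ, ∀ N : ℕ, N₀ ≤ N →
      ∀ k : ℤ, 0 ≤ k → k ≤ (N:ℤ) →
        |xstar.x ((k:ℝ)/(N:ℝ)) - xN N k| ≤ ε := by
  obtain ⟨m, hm, hmle⟩ := hfx_lb
  set m' := min m 0 with hm'def
  have hm'1 : -1 < m' := lt_min hm (by norm_num)
  have hm'0 : m' ≤ 0 := min_le_right _ _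
  have hm'pos : (0:ℝ) < 1 + m' := by linarith
  -- continuity of x⋆
  have hx_cont : ContinuousOn xstar.x (Set.Icc 0 1) := by
    have hprim : ContinuousOn (fun t => xstar.x 0 + ∫ s in (0:ℝ)..t, xstar.dx s)
        (Set.Icc 0 1) := by
      apply continuousOn_const.add
      have h01' : (0:ℝ) ∈ Set.uIcc (0:ℝ) 1 := Set.left_mem_uIcc
      have := intervalIntegral.continuousOn_primitive_interval' xstar.dx_int h01'
      simpa [Set.uIcc_of_le (by norm_num : (0:ℝ) ≤ 1)] using this
    exact hprim.congr xstar.x_rep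
  set g : ℝ → ℝ := fun t => f t (xstar.x t) + v t with hgdef
  have hg_cont : ContinuousOn g (Set.Icc 0 1) := by
    apply ContinuousOn.add ?_ hv
    have hpair : ContinuousOn (fun t : ℝ => ((t, xstar.x t) : ℝ × ℝ)) (Set.Icc 0 1) :=
      continuousOn_id.prodMk hx_cont
    exact hf_cont.comp hpair (fun t ht => ⟨ht, Set.mem_univ _⟩)
  have hae : ∀ᵐ u ∂(volume : Measure ℝ), u ∈ Set.Ioc (0:ℝ) 1 → xstar.ddx u = g u :=
    (ae_restrict_iff' measurableSet_Ioc).mp hxstar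
  have hdxrep' : ∀ t ∈ Set.Icc (0:ℝ) 1, xstar.dx t = xstar.dx 0 + ∫ s in (0:ℝ)..t, g s := by
    intro t ht
    rw [xstar.dx_rep t ht]
    congr 1
    apply intervalIntegral.integral_congr_ae
    filter_upwards [hae] with u hu hmem
    apply hu
    rw [Set.uIoc_of_le ht.1] at hmem
    exact ⟨hmem.1, le_trans hmem.2 ht.2⟩
  have hgu := isCompact_Icc.uniformContinuousOn_of_continuous hg_cont
  rw [Metric.uniformContinuousOn_iff] at hgu
  intro ε hε
  have hε₁ : 0 < (1 + m') * ε := mul_pos hm'pos hε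
  obtain ⟨δ, hδ0, hδ⟩ := hgu ((1 + m') * ε) hε₁
  obtain ⟨N₁, hN₁⟩ := exists_nat_gt (2/δ)
  refine ⟨max 2 (N₁ + 1), fun N hNb => ?_⟩
  have hN2 : 2 ≤ N := le_trans (le_max_left _ _) hNb
  have hNR : (0:ℝ) < N := by
    have : (0:ℕ) < N := by omega
    exact_mod_cast this
  have hNne : (N:ℝ) ≠ 0 := ne_of_gt hNR
  have h2N : 2 / (N:ℝ) < δ := by
    have hN1N : (N₁:ℝ) < (N:ℝ) := by
      have : N₁ + 1 ≤ N := le_trans (le_max_right _ _) hNb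
      exact_mod_cast this
    have h8 : 2/δ < (N:ℝ) := lt_trans hN₁ hN1N
    rw [div_lt_iff₀ hNR]
    rw [div_lt_iff₀ hδ0] at h8
    linarith
  obtain ⟨hxN0, hxNN, hxNeq⟩ := hxN N hN2
  set e : ℕ → ℝ := fun k => xstar.x ((k:ℝ)/(N:ℝ)) - xN N (k:ℤ) with hedef
  have he0 : e 0 = 0 := by simp [hedef, xstar.bc0, hxN0]
  have heN : e N = 0 := by simp [hedef, div_self hNne, xstar.bc1, hxNN]
  -- grid points in [0,1]
  have hgrid : ∀ j : ℕ, j < N - 1 → ((j:ℝ)+1)/(N:ℝ) ∈ Set.Icc (0:ℝ) 1 := by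
    intro j hj
    constructor
    · positivity
    · rw [div_le_one hNR]
      have : (j:ℝ) + 2 ≤ (N:ℝ) := by
        have h9 : j + 2 ≤ N := by omega
        exact_mod_cast h9
      linarith
  -- MVT coefficients
  have hmvt : ∀ j : ℕ, ∃ cc : ℝ, m' ≤ cc ∧
      (j < N - 1 → f (((j:ℝ)+1)/(N:ℝ)) (xstar.x (((j:ℝ)+1)/(N:ℝ)))
        - f (((j:ℝ)+1)/(N:ℝ)) (xN N ((j:ℤ)+1))
        = cc * (xstar.x (((j:ℝ)+1)/(N:ℝ)) - xN N ((j:ℤ)+1))) := by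
    intro j
    by_cases hj : j < N - 1
    · obtain ⟨cc, hcc1, hcc2⟩ := mvt_coeff f fx (((j:ℝ)+1)/(N:ℝ)) (hgrid j hj) hfx_deriv m'
        (fun zz => le_trans (min_le_left m 0) (hmle _ (hgrid j hj) zz))
        (xstar.x (((j:ℝ)+1)/(N:ℝ))) (xN N ((j:ℤ)+1))
      exact ⟨cc, hcc1, fun _ => hcc2⟩
    · exact ⟨m', le_refl _, fun h => absurd h hj⟩
  choose cfun hcfun1 hcfun2 using hmvt
  set τ : ℕ → ℝ := fun j =>
    xstar.x (((j:ℝ)+1)/(N:ℝ) + 1/(N:ℝ)) - 2*xstar.x (((j:ℝ)+1)/(N:ℝ))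
      + xstar.x (((j:ℝ)+1)/(N:ℝ) - 1/(N:ℝ)) - (1/(N:ℝ))^2 * g (((j:ℝ)+1)/(N:ℝ)) with hτdef
  have hT : ∀ j, j < N - 1 → |τ j| ≤ (1/(N:ℝ))^2 * ((1+m')*ε) := by
    intro j hj
    apply truncation_estimate xstar.x xstar.dx g hg_cont xstar.x_rep hdxrep'
    · positivity
    · rw [div_le_div_iff_of_pos_right hNR]
      linarith [Nat.cast_nonneg (α := ℝ) j]
    · rw [← add_div, div_le_one hNR]
      have h9 : j + 2 ≤ N := by omega
      have : (j:ℝ) + 2 ≤ (N:ℝ) := by exact_mod_cast h9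
      linarith
    · exact le_of_lt hε₁
    · intro u hu habs
      have hdu : dist u (((j:ℝ)+1)/(N:ℝ)) < δ := by
        rw [Real.dist_eq]
        calc |u - ((j:ℝ)+1)/(N:ℝ)| ≤ 2 * (1/(N:ℝ)) := habs
          _ = 2/(N:ℝ) := by ring
          _ < δ := h2N
      have := hδ u hu (((j:ℝ)+1)/(N:ℝ)) (hgrid j hj) hdu
      rw [Real.dist_eq] at this
      exact le_of_lt this
  -- the discrete equation for the error
  have heq : ∀ j, j < N - 1 →
      e (j+2) - 2*e (j+1) + e j = cfun j / (N:ℝ)^2 * e (j+1) + τ j := by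
    intro j hj
    have hj1 : (1:ℤ) ≤ (j:ℤ)+1 := by omega
    have hj2 : (j:ℤ)+1 ≤ (N:ℤ)-1 := by omega
    have hdisc := hxNeq ((j:ℤ)+1) hj1 hj2
    have ha1 : (j:ℤ)+1+1 = ((j:ℤ)+2) := by ring
    have ha2 : (j:ℤ)+1-1 = (j:ℤ) := by ring
    rw [ha1, ha2] at hdisc
    have hrc : (((j:ℤ)+1 : ℤ) : ℝ) = (j:ℝ)+1 := by push_cast; ring
    rw [hrc] at hdisc
    have hcc := hcfun2 j hj
    have hp1 : ((j:ℝ)+1)/(N:ℝ) + 1/(N:ℝ) = ((j:ℝ)+2)/(N:ℝ) := by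
      rw [← add_div]; ring_nf
    have hp0 : ((j:ℝ)+1)/(N:ℝ) - 1/(N:ℝ) = (j:ℝ)/(N:ℝ) := by
      rw [div_sub_div_same]; ring_nf
    have hga : g (((j:ℝ)+1)/(N:ℝ))
        = f (((j:ℝ)+1)/(N:ℝ)) (xstar.x (((j:ℝ)+1)/(N:ℝ))) + v (((j:ℝ)+1)/(N:ℝ)) := rfl
    simp only [hedef, hτdef, hp1, hp0, hga]
    push_cast
    linear_combination (-1 : ℝ) * hdisc + (1/(N:ℝ)^2) * hcc
  have hstab := discrete_stability N hN2 e cfun τ m' ((1/(N:ℝ))^2 * ((1+m')*ε))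
    hm'1 hm'0 he0 heN hcfun1 heq hT
  intro k hk0 hkN
  have hkn : k = ((k.toNat : ℕ) : ℤ) := (Int.toNat_of_nonneg hk0).symm
  have hkNn : k.toNat ≤ N := by omega
  have hfin := hstab k.toNat hkNn
  have hval : (N:ℝ)^2 * ((1/(N:ℝ))^2 * ((1+m')*ε)) / (1+m') = ε := by
    field_simp
  rw [hval] at hfin
  simp only [hedef] at hfin
  rw [hkn, Int.cast_natCast]
  exact hfin
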